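/- If G is a finite group with ψ(G)/|G|² > 27/64, then G is abelian. -/

import Mathlib

set_option maxHeartbeats 1000000

open Finset Subgroup



/-- If every square lies in a central subgroup of odd exponent, the group is abelian. -/
lemma aux_odd_abelian {G : Type*} [Group G] (Z : Subgroup G) (q : ℕ) (hqo : Odd q)
    (hq1 : ∀ z ∈ Z, z ^ q = 1)
    (hcen : ∀ z ∈ Z, ∀ g : G, g * z = z * g)
    (hsq : ∀ x : G, x ^ 2 ∈ Z) : ∀ a b : G, a * b = b * a := by
  -- involutions commute
  have key : ∀ u v : G, u * u = 1 → v * v = 1 → u * v = v * u := by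
    intro u v hu hv
    have hu' : u⁻¹ = u := inv_eq_of_mul_eq_one_right hu
    have hv' : v⁻¹ = v := inv_eq_of_mul_eq_one_right hv
    set w := u * v with hw
    have hZ2 : w ^ 2 ∈ Z := hsq w
    have hvu : v * u = w⁻¹ := by rw [hw, mul_inv_rev, hu', hv']
    have h1 : u * w ^ 2 * u = (w ^ 2)⁻¹ := by
      have e : u * w ^ 2 * u = (u * u) * ((v * u) * (v * u)) := by
        simp only [hw, pow_two, mul_assoc, one_mul]
      rw [e, hu, one_mul, hvu, ← pow_two, inv_pow]
    have h2 : u * w ^ 2 * u = w ^ 2 := by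
      rw [hcen _ hZ2 u, mul_assoc, hu, mul_one]
    have h3 : w ^ 2 = (w ^ 2)⁻¹ := by rw [← h1, h2]
    have h4 : (w ^ 2) ^ 2 = 1 := by
      rw [pow_two]; nth_rewrite 2 [h3]; simp
    have h5 : (w ^ 2) ^ q = 1 := hq1 _ hZ2
    obtain ⟨k, hk⟩ := hqo
    have h6 : w ^ 2 = 1 := by
      have e2 : (w ^ 2) ^ q = w ^ 2 := by
        rw [hk, pow_succ, pow_mul, h4, one_pow, one_mul]
      rw [h5] at e2; exact e2.symm
    have h7 : w⁻¹ = w := by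
      rw [pow_two] at h6; exact inv_eq_of_mul_eq_one_right h6
    calc u * v = w := hw.symm
      _ = w⁻¹ := h7.symm
      _ = v * u := hvu.symm
  intro a b
  obtain ⟨k, hk⟩ := hqo
  have hksucc : q + 1 = 2 * (k + 1) := by omega
  have hzmem : ∀ x : G, x ^ (q + 1) ∈ Z := by
    intro x
    rw [hksucc, pow_mul]
    exact Subgroup.pow_mem Z (hsq x) (k + 1)
  have hinv : ∀ x : G, (x ^ q) * (x ^ q) = 1 := by
    intro x
    rw [← pow_add]
    have e : q + q = 2 * q := by omega
    rw [e, pow_mul]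
    exact hq1 _ (hsq x)
  have hdec : ∀ x : G, x = (x ^ q)⁻¹ * x ^ (q + 1) := by
    intro x
    rw [pow_succ, ← mul_assoc, inv_mul_cancel, one_mul]
  have c1 : ∀ g : G, Commute g (a ^ (q + 1)) := fun g => hcen _ (hzmem a) g
  have c2 : ∀ g : G, Commute g (b ^ (q + 1)) := fun g => hcen _ (hzmem b) g
  have ckey : Commute (a ^ q) (b ^ q) := key _ _ (hinv a) (hinv b)
  have c3 : Commute (a ^ q)⁻¹ (b ^ q)⁻¹ := ckey.inv_inv
  have comm : Commute a b := by
    rw [hdec a, hdec b]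
    exact (c3.mul_right (c2 _)).mul_left ((c1 _).symm.mul_right (c2 _))
  exact comm



/-- In a cyclic group of even order 2r, the sum of element orders is at most 3r². -/
lemma aux_cyclic_sum {H : Type*} [Group H] [Fintype H] [IsCyclic H] (r : ℕ) (hr0 : 0 < r)
    (hcard : Fintype.card H = 2 * r) :
    4 * (∑ x : H, orderOf x) ≤ 3 * (2 * r) ^ 2 := by
  classical
  letI : CommGroup H := IsCyclic.commGroup
  -- squaring is (≤2)-to-1
  have hfib : ∀ b ∈ univ.image (fun x : H => x ^ 2),
      (univ.filter fun a : H => a ^ 2 = b).card ≤ 2 := by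
    intro b hb
    obtain ⟨y, -, hy⟩ := Finset.mem_image.mp hb
    have h1 : (univ.filter fun a : H => a ^ 2 = b).card
        ≤ (univ.filter fun z : H => z ^ 2 = 1).card := by
      apply Finset.card_le_card_of_injOn (fun a => a * y⁻¹)
      · intro a ha
        simp only [mem_coe, mem_filter, mem_univ, true_and] at ha ⊢
        rw [mul_pow, ha, ← hy, inv_pow, mul_inv_cancel]
      · intro a _ a' _ hmul
        exact mul_right_cancel hmul
    exact h1.trans (IsCyclic.card_pow_eq_one_le (by norm_num))
  have himg : 2 * r ≤ 2 * (univ.image (fun x : H => x ^ 2)).card := by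
    calc 2 * r = (univ : Finset H).card := by rw [card_univ, hcard]
      _ ≤ 2 * (univ.image (fun x : H => x ^ 2)).card :=
          Finset.card_le_mul_card_image _ 2 hfib
  have hroots : r ≤ (univ.filter fun x : H => x ^ r = 1).card := by
    have hsub : univ.image (fun x : H => x ^ 2) ⊆ univ.filter (fun x : H => x ^ r = 1) := by
      intro x hx
      obtain ⟨y, -, hy⟩ := Finset.mem_image.mp hx
      simp only [mem_filter, mem_univ, true_and]
      rw [← hy, ← pow_mul, ← hcard, pow_card_eq_one]
    have := card_le_card hsub
    omega
  set t := (univ.filter fun x : H => x ^ r = 1).card with ht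
  have hsplit : (∑ x : H, orderOf x) ≤ t * r + (2 * r - t) * (2 * r) := by
    rw [← Finset.sum_filter_add_sum_filter_not univ (fun x : H => x ^ r = 1)]
    have b1 : ∑ x ∈ univ.filter (fun x : H => x ^ r = 1), orderOf x ≤ t * r := by
      apply Finset.sum_le_card_nsmul
      intro x hx
      simp only [mem_filter] at hx
      exact orderOf_le_of_pow_eq_one hr0 hx.2
    have b2 : ∑ x ∈ univ.filter (fun x : H => ¬ x ^ r = 1), orderOf x ≤ (2 * r - t) * (2 * r) := by
      have hcardc : (univ.filter fun x : H => ¬ x ^ r = 1).card = 2 * r - t := by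
        have e6 := Finset.card_filter_add_card_filter_not (s := univ)
          (p := fun x : H => x ^ r = 1)
        simp only [Finset.card_univ, hcard] at e6
        omega
      calc ∑ x ∈ univ.filter (fun x : H => ¬ x ^ r = 1), orderOf x
          ≤ (univ.filter fun x : H => ¬ x ^ r = 1).card * (2 * r) := by
            apply Finset.sum_le_card_nsmul
            intro x _
            rw [← hcard]
            exact orderOf_le_card_univ
        _ = (2 * r - t) * (2 * r) := by rw [hcardc]
    omega
  have htle : t ≤ 2 * r := by
    calc t ≤ (univ : Finset H).card := card_filter_le _ _
      _ = 2 * r := by rw [card_univ, hcard]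
  set c := 2 * r - t with hcdef
  have hc : t + c = 2 * r := by omega
  have e9 : c ≤ r := by omega
  have e8 : t * r + c * (2 * r) = (t + c) * r + c * r := by ring
  calc 4 * (∑ x : H, orderOf x) ≤ 4 * (t * r + c * (2 * r)) := by omega
    _ = 4 * ((t + c) * r + c * r) := by rw [e8]
    _ = 4 * (2 * r * r + c * r) := by rw [hc]
    _ ≤ 4 * (2 * r * r + r * r) := by
        have := Nat.mul_le_mul_right r e9
        omega
    _ = 3 * (2 * r) ^ 2 := by ring


/-- If ψ''(G) > 27/64 then G is abelian. -/
theorem abelian_of_psi'' (G : Type*) [Group G] [Fintype G]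
    (h : ((∑ x : G, orderOf x : ℕ) : ℚ) / (Fintype.card G : ℚ) ^ 2 > 27 / 64) :
    ∀ a b : G, a * b = b * a := by
  classical
  by_contra hc
  set n := Fintype.card G with hn
  have hn0 : 0 < n := Fintype.card_pos
  set ψ := ∑ x : G, orderOf x with hψ
  have hnum : 27 * n ^ 2 < ψ * 64 := by
    rw [gt_iff_lt, div_lt_div_iff₀ (by norm_num) (by positivity)] at h
    exact_mod_cast h
  -- no element of full order
  have hNC : ∀ x : G, orderOf x ≠ n := by
    intro x hx
    have hcyc : IsCyclic G :=
      isCyclic_of_orderOf_eq_card x (by rw [Nat.card_eq_fintype_card]; exact hx)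
    obtain ⟨g, hg⟩ := IsCyclic.exists_generator (α := G)
    refine hc fun s t => ?_
    obtain ⟨i, hi⟩ := Subgroup.mem_zpowers_iff.mp (hg s)
    obtain ⟨j, hj⟩ := Subgroup.mem_zpowers_iff.mp (hg t)
    rw [← hi, ← hj, ← zpow_add, ← zpow_add, add_comm]
  have h3 : ∀ x : G, 2 * orderOf x ≠ n → 3 * orderOf x ≤ n := by
    intro x hx
    obtain ⟨c, hcq⟩ := orderOf_dvd_card (x := x)
    have ho0 : 0 < orderOf x := orderOf_pos x
    have hxn : orderOf x ≠ n := hNC x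
    have hc3 : 3 ≤ c := by
      by_contra hlt
      push_neg at hlt
      interval_cases c <;> omega
    calc 3 * orderOf x ≤ orderOf x * c := by
          rw [mul_comm 3 _]; exact Nat.mul_le_mul_left _ hc3
      _ = n := hcq.symm
  -- existence of an element of order n/2
  have hm : ∃ a : G, 2 * orderOf a = n := by
    by_contra hno
    push_neg at hno
    have hb3 : 3 * ψ ≤ n * n := by
      calc 3 * ψ = ∑ x : G, 3 * orderOf x := by rw [hψ, Finset.mul_sum]
        _ ≤ ∑ _x : G, n := Finset.sum_le_sum fun x _ => h3 x (hno x)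
        _ = n * n := by rw [Finset.sum_const, Finset.card_univ, ← hn, smul_eq_mul]
    nlinarith [hnum, hb3, hn0]
  obtain ⟨a, ha2⟩ := hm
  set m := orderOf a with hmdef
  have hm0 : 0 < m := orderOf_pos a
  set A := Subgroup.zpowers a with hA
  have hcardA : Nat.card A = m := Nat.card_zpowers a
  -- counting elements of order n/2
  set S := Finset.univ.filter (fun x : G => 2 * orderOf x = n) with hS
  have hk : 17 * n < 32 * S.card := by
    have hpart := Finset.sum_filter_add_sum_filter_not Finset.univ
      (fun x : G => 2 * orderOf x = n) (fun x => orderOf x)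
    have hS1 : ∑ x ∈ S, orderOf x ≤ S.card * m := by
      apply Finset.sum_le_card_nsmul
      intro x hx
      simp only [hS, Finset.mem_filter] at hx
      omega
    have hScard : S.card ≤ n := by
      calc S.card ≤ (Finset.univ : Finset G).card := Finset.card_filter_le _ _
        _ = n := by rw [Finset.card_univ]
    have hcardc : (Finset.univ.filter (fun x : G => ¬ 2 * orderOf x = n)).card
        = n - S.card := by
      have e6 := Finset.card_filter_add_card_filter_not (s := Finset.univ)
        (p := fun x : G => 2 * orderOf x = n)
      simp only [Finset.card_univ, ← hn] at e6
      rw [← hS] at e6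
      omega
    have hS2 : 3 * ∑ x ∈ Finset.univ.filter (fun x : G => ¬ 2 * orderOf x = n), orderOf x
        ≤ (n - S.card) * n := by
      calc 3 * ∑ x ∈ Finset.univ.filter (fun x : G => ¬ 2 * orderOf x = n), orderOf x
          = ∑ x ∈ Finset.univ.filter (fun x : G => ¬ 2 * orderOf x = n), 3 * orderOf x := by
            rw [Finset.mul_sum]
        _ ≤ ∑ _x ∈ Finset.univ.filter (fun x : G => ¬ 2 * orderOf x = n), n := by
            apply Finset.sum_le_sum
            intro x hx
            simp only [Finset.mem_filter] at hx
            exact h3 x hx.2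
        _ = (n - S.card) * n := by rw [Finset.sum_const, hcardc, smul_eq_mul]
    have e3 : (n - S.card) * n + S.card * n = n * n := by
      rw [← Nat.add_mul]
      congr 1
      omega
    have hS2' : 3 * (∑ x ∈ Finset.univ.filter (fun x : G => ¬ 2 * orderOf x = n), orderOf x)
        + S.card * n ≤ n * n := by
      have := Nat.add_le_add_right hS2 (S.card * n)
      omega
    have e2 : ψ = (∑ x ∈ S, orderOf x)
        + ∑ x ∈ Finset.univ.filter (fun x : G => ¬ 2 * orderOf x = n), orderOf x := by
      rw [hψ, ← hpart]
    have hnn : n = 2 * m := by omega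
    have e1 : S.card * n = 2 * (S.card * m) := by rw [hnn]; ring
    have hnum' : 27 * (n * n) < ψ * 64 := by rw [← pow_two]; exact hnum
    have h6 : 6 * ψ ≤ S.card * n + 2 * (n * n) := by linarith [hS1, hS2', e2, e1]
    have e5 : 17 * n * n < 32 * S.card * n := by linarith [h6, hnum']
    exact Nat.lt_of_mul_lt_mul_right e5
  -- get b of order m outside A
  have hbex : ∃ b : G, 2 * orderOf b = n ∧ b ∉ A := by
    by_contra hno
    push_neg at hno
    have hsub : S ⊆ Finset.univ.filter (fun x : G => x ∈ A) := by
      intro x hx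
      simp only [hS, Finset.mem_filter, Finset.mem_univ, true_and] at hx ⊢
      exact hno x hx
    have h1 : S.card ≤ m := by
      calc S.card ≤ (Finset.univ.filter (fun x : G => x ∈ A)).card := Finset.card_le_card hsub
        _ = Fintype.card {x : G // x ∈ A} := (Fintype.card_subtype _).symm
        _ = Nat.card A := Nat.card_eq_fintype_card.symm
        _ = m := hcardA
    omega
  obtain ⟨b, hb2, hbA⟩ := hbex
  set B := Subgroup.zpowers b with hB
  have hcardB : Nat.card B = m := by
    rw [hB, Nat.card_zpowers]; omega
  have hnG : Nat.card G = n := Nat.card_eq_fintype_card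
  have hAidx : A.index = 2 := by
    have hh := Subgroup.card_mul_index A
    rw [hcardA, hnG] at hh
    have h2m : n = 2 * m := by omega
    rw [h2m, mul_comm 2 m] at hh
    exact Nat.eq_of_mul_eq_mul_left hm0 hh
  have hBidx : B.index = 2 := by
    have hh := Subgroup.card_mul_index B
    rw [hcardB, hnG] at hh
    have h2m : n = 2 * m := by omega
    rw [h2m, mul_comm 2 m] at hh
    exact Nat.eq_of_mul_eq_mul_left hm0 hh
  set Z := A ⊓ B with hZdef
  have hZq : Nat.card Z * 2 = m := by
    have hZdvd : Nat.card Z ∣ m := by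
      rw [← hcardA]; exact Subgroup.card_dvd_of_le inf_le_left
    have hZind : Nat.card Z * Z.index = n := by rw [Subgroup.card_mul_index, hnG]
    have hZidx4 : Z.index ≤ 4 := by
      calc Z.index ≤ A.index * B.index := Subgroup.index_inf_le
        _ = 4 := by rw [hAidx, hBidx]
    have hZneA : Nat.card Z ≠ m := by
      intro hEq
      have hZA : Z = A := Subgroup.eq_of_le_of_card_ge inf_le_left (by rw [hcardA, hEq])
      have hAB : A ≤ B := by rw [← hZA]; exact inf_le_right
      have hABeq : A = B := Subgroup.eq_of_le_of_card_ge hAB (by rw [hcardA, hcardB])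
      exact hbA (hABeq ▸ Subgroup.mem_zpowers b)
    obtain ⟨c, hcq⟩ := hZdvd
    have hz0 : 0 < Nat.card Z := Nat.card_pos
    have hc2 : 2 ≤ c := by
      by_contra hlt
      push_neg at hlt
      interval_cases c <;> omega
    have hup : 2 * m ≤ 4 * Nat.card Z := by
      calc 2 * m = n := ha2
        _ = Nat.card Z * Z.index := hZind.symm
        _ ≤ Nat.card Z * 4 := Nat.mul_le_mul_left _ hZidx4
        _ = 4 * Nat.card Z := by ring
    have hlow : 2 * Nat.card Z ≤ m := by
      calc 2 * Nat.card Z ≤ c * Nat.card Z := Nat.mul_le_mul_right _ hc2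
        _ = m := by rw [mul_comm]; exact hcq.symm
    omega
  set q := Nat.card Z with hqdef
  have hq0 : 0 < q := Nat.card_pos
  have hn4q : n = 4 * q := by omega
  -- A ⊔ B = ⊤
  have hsup : A ⊔ B = ⊤ := by
    have hd : Nat.card (A ⊔ B : Subgroup G) ∣ n := by
      rw [← hnG]; exact Subgroup.card_subgroup_dvd_card _
    have hdm : m ∣ Nat.card (A ⊔ B : Subgroup G) := by
      rw [← hcardA]; exact Subgroup.card_dvd_of_le le_sup_left
    have hne : Nat.card (A ⊔ B : Subgroup G) ≠ m := by
      intro hEq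
      have hAeq : A = A ⊔ B := Subgroup.eq_of_le_of_card_ge le_sup_left (by rw [hcardA, hEq])
      have hbin : b ∈ A ⊔ B := Subgroup.mem_sup_right (Subgroup.mem_zpowers b)
      rw [← hAeq] at hbin
      exact hbA hbin
    obtain ⟨c, hcq⟩ := hdm
    obtain ⟨e, heq⟩ := hd
    have hcard2m : Nat.card (A ⊔ B : Subgroup G) = n := by
      have hce : m * (c * e) = m * 2 := by
        rw [← mul_assoc, ← hcq, ← heq]; omega
      have hce2 : c * e = 2 := Nat.eq_of_mul_eq_mul_left hm0 hce
      have hc1 : c ≠ 1 := fun h1 => hne (by rw [hcq, h1, mul_one])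
      have hcle : c ≤ 2 := Nat.le_of_dvd (by norm_num) ⟨e, hce2.symm⟩
      have hc2' : c = 2 := by
        have hc0 : c ≠ 0 := by
          intro h0
          rw [h0] at hce2
          simp at hce2
        omega
      rw [hcq, hc2']; omega
    exact Subgroup.eq_top_of_card_eq (H := A ⊔ B) (by rw [hcard2m, hnG])
  -- Z is central
  have hcen : ∀ z ∈ Z, ∀ g : G, g * z = z * g := by
    intro z hz g
    have hzA : z ∈ A := (Subgroup.mem_inf.mp hz).1
    have hzB : z ∈ B := (Subgroup.mem_inf.mp hz).2
    have hAc : A ≤ Subgroup.centralizer {z} := by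
      rw [hA, Subgroup.zpowers_le, Subgroup.mem_centralizer_iff]
      intro y hy
      rw [Set.mem_singleton_iff] at hy
      subst hy
      obtain ⟨i, hi⟩ := Subgroup.mem_zpowers_iff.mp hzA
      rw [← hi]
      exact ((Commute.refl a).zpow_left i).eq
    have hBc : B ≤ Subgroup.centralizer {z} := by
      rw [hB, Subgroup.zpowers_le, Subgroup.mem_centralizer_iff]
      intro y hy
      rw [Set.mem_singleton_iff] at hy
      subst hy
      obtain ⟨i, hi⟩ := Subgroup.mem_zpowers_iff.mp hzB
      rw [← hi]
      exact ((Commute.refl b).zpow_left i).eq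
    have hg : g ∈ A ⊔ B := by rw [hsup]; exact Subgroup.mem_top g
    have hgc : g ∈ Subgroup.centralizer {z} := (sup_le hAc hBc) hg
    exact (Subgroup.mem_centralizer_iff.mp hgc z rfl).symm
  haveI hZnormal : Z.Normal := by
    constructor
    intro z hz g
    rw [hcen z hz g, mul_inv_cancel_right]
    exact hz
  -- dichotomy on squares
  have hsq : ∀ x : G, x ^ 2 ∈ Z := by
    by_contra hxex
    push_neg at hxex
    obtain ⟨x, hx⟩ := hxex
    have hidx4 : Z.index = 4 := by
      have hh := Subgroup.card_mul_index Z
      rw [← hqdef, hnG, hn4q, mul_comm 4 q] at hh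
      exact Nat.eq_of_mul_eq_mul_left hq0 hh
    have hcard4 : Nat.card (G ⧸ Z) = 4 := by
      rw [← Subgroup.index_eq_card, hidx4]
    have hxo : orderOf ((x : G ⧸ Z)) = 4 := by
      have hdvd4 : orderOf ((x : G ⧸ Z)) ∣ 4 := hcard4 ▸ orderOf_dvd_natCard _
      have hne2 : ¬ orderOf ((x : G ⧸ Z)) ∣ 2 := by
        rw [orderOf_dvd_iff_pow_eq_one]
        intro h2
        apply hx
        rw [← QuotientGroup.mk_pow, QuotientGroup.eq_one_iff] at h2
        exact h2
      have hle : orderOf ((x : G ⧸ Z)) ≤ 4 := Nat.le_of_dvd (by norm_num) hdvd4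
      interval_cases ho : orderOf ((x : G ⧸ Z)) <;>
        first
          | rfl
          | (revert hdvd4 hne2; decide)
    haveI : IsCyclic (G ⧸ Z) :=
      isCyclic_of_orderOf_eq_card ((x : G ⧸ Z)) (by rw [hxo, hcard4])
    refine hc (commutative_of_cyclic_center_quotient (QuotientGroup.mk' Z) ?_)
    rw [QuotientGroup.ker_mk']
    intro z hz
    exact Subgroup.mem_center_iff.mpr (hcen z hz)
  -- all orders divide 2q
  have hq1 : ∀ z ∈ Z, z ^ q = 1 := by
    intro z hz
    have hdvd : orderOf z ∣ q := Subgroup.orderOf_dvd_natCard Z hz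
    exact orderOf_dvd_iff_pow_eq_one.mp hdvd
  have hord : ∀ x : G, x ^ (2 * q) = 1 := by
    intro x
    rw [pow_mul]
    exact hq1 _ (hsq x)
  rcases Nat.even_or_odd q with hqe | hqo
  · -- even case: counting
    obtain ⟨r, hr⟩ := hqe
    have hq2r : q = 2 * r := by omega
    have hr0 : 0 < r := by omega
    haveI hcycA : IsCyclic ↥A := by
      refine ⟨⟨⟨a, Subgroup.mem_zpowers a⟩, fun x => ?_⟩⟩
      obtain ⟨k, hk⟩ := Subgroup.mem_zpowers_iff.mp x.2
      refine Subgroup.mem_zpowers_iff.mpr ⟨k, ?_⟩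
      ext
      rw [SubgroupClass.coe_zpow]
      exact hk
    haveI hcycZ : IsCyclic ↥Z := Subgroup.isCyclic_of_le (inf_le_left : A ⊓ B ≤ A)
    have hcardZ : Fintype.card ↥Z = 2 * r := by
      rw [← Nat.card_eq_fintype_card, ← hqdef, hq2r]
    have hZsum := aux_cyclic_sum r hr0 hcardZ
    have hZsumG : 4 * (∑ x ∈ Finset.univ.filter (fun x : G => x ∈ Z), orderOf x)
        ≤ 3 * q ^ 2 := by
      have e1 : ∑ x ∈ Finset.univ.filter (fun x : G => x ∈ Z), orderOf x
          = ∑ x : ↥Z, orderOf (x : G) := by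
        rw [Finset.sum_subtype]
        intro x
        simp only [Finset.mem_filter, Finset.mem_univ, true_and]
      have e2 : ∑ x : ↥Z, orderOf (x : G) = ∑ x : ↥Z, orderOf x := by
        apply Finset.sum_congr rfl
        intro x _
        exact Subgroup.orderOf_coe x
      rw [e1, e2, hq2r]
      exact hZsum
    have hcardZfil : (Finset.univ.filter (fun x : G => x ∈ Z)).card = q := by
      rw [← Fintype.card_subtype, ← Nat.card_eq_fintype_card, ← hqdef]
    have hrest : ∑ x ∈ Finset.univ.filter (fun x : G => ¬ x ∈ Z), orderOf x
        ≤ 3 * q * (2 * q) := by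
      have hcardc : (Finset.univ.filter (fun x : G => ¬ x ∈ Z)).card = 3 * q := by
        have e6 := Finset.card_filter_add_card_filter_not (s := Finset.univ)
          (p := fun x : G => x ∈ Z)
        simp only [Finset.card_univ, ← hn] at e6
        omega
      calc ∑ x ∈ Finset.univ.filter (fun x : G => ¬ x ∈ Z), orderOf x
          ≤ (Finset.univ.filter (fun x : G => ¬ x ∈ Z)).card * (2 * q) := by
            apply Finset.sum_le_card_nsmul
            intro x _
            exact orderOf_le_of_pow_eq_one (by omega) (hord x)
        _ = 3 * q * (2 * q) := by rw [hcardc]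
    have hfinal : 4 * ψ ≤ 27 * q ^ 2 := by
      have hpart := Finset.sum_filter_add_sum_filter_not Finset.univ
        (fun x : G => x ∈ Z) (fun x => orderOf x)
      have e2 : ψ = (∑ x ∈ Finset.univ.filter (fun x : G => x ∈ Z), orderOf x)
          + ∑ x ∈ Finset.univ.filter (fun x : G => ¬ x ∈ Z), orderOf x := by
        rw [hψ, ← hpart]
      nlinarith [hZsumG, hrest, e2]
    rw [hn4q] at hnum
    nlinarith [hnum, hfinal]
  · -- odd case: equational argument
    exact hc (aux_odd_abelian Z q hqo hq1 hcen hsq)
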